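/- For the sequence w_n = n and all n ≥ k ≥ 1, c_{n,k}(n) = C(n+k-1, n-k). -/

import Mathlib

open Finset

/-- `colorCompCount w n k = c_{n,k}(w)`: the sum over all `(k₁,…,kₙ)` with
`Σ i·kᵢ = n` and `Σ kᵢ = k` of the multinomial `k!/(k₁!⋯kₙ!)` times
`w₁^{k₁} ⋯ wₙ^{kₙ}`.  (Each `kᵢ ≤ k`, so we may range over `Fin n → Fin (k+1)`.) -/
def colorCompCount (w : ℕ → ℤ) (n k : ℕ) : ℤ :=
  ∑ f ∈ Finset.univ.filter (fun f : Fin n → Fin (k + 1) =>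
      (∑ i : Fin n, ((i : ℕ) + 1) * (f i : ℕ)) = n ∧ (∑ i : Fin n, (f i : ℕ)) = k),
    (Nat.multinomial Finset.univ (fun i => (f i : ℕ)) : ℤ) *
      ∏ i : Fin n, w ((i : ℕ) + 1) ^ (f i : ℕ)


open PowerSeries in
noncomputable def P (w : ℕ → ℤ) (n : ℕ) : ℤ⟦X⟧ :=
  ∑ i : Fin n, PowerSeries.C (w ((i : ℕ) + 1)) * X ^ ((i : ℕ) + 1)


open PowerSeries in
lemma colorCompCountAux1 (w : ℕ → ℤ) (n k : ℕ) :
    colorCompCount w n k = PowerSeries.coeff n ((P w n) ^ k) := by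
  rw [colorCompCount, P, Finset.sum_pow_eq_sum_piAntidiag, map_sum]
  have step : ∀ g ∈ piAntidiag (univ : Finset (Fin n)) k,
      PowerSeries.coeff n ((Nat.multinomial univ g : ℤ⟦X⟧) *
        ∏ i : Fin n, (PowerSeries.C (w ((i : ℕ) + 1)) * X ^ ((i : ℕ) + 1)) ^ g i)
      = if (∑ i : Fin n, ((i : ℕ) + 1) * g i) = n then
          (Nat.multinomial univ g : ℤ) * ∏ i : Fin n, w ((i : ℕ) + 1) ^ g i
        else 0 := by
    intro g _
    have : ((Nat.multinomial univ g : ℤ⟦X⟧) *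
        ∏ i : Fin n, (PowerSeries.C (w ((i : ℕ) + 1)) * X ^ ((i : ℕ) + 1)) ^ g i)
        = PowerSeries.C ((Nat.multinomial univ g : ℤ) * ∏ i : Fin n, w ((i : ℕ) + 1) ^ g i)
          * X ^ (∑ i : Fin n, ((i : ℕ) + 1) * g i) := by
      simp only [mul_pow, ← map_pow, ← pow_mul]
      rw [Finset.prod_mul_distrib, ← Finset.prod_pow_eq_pow_sum]
      simp only [map_mul, map_natCast, map_prod]
      ring
    rw [this, PowerSeries.coeff_C_mul, PowerSeries.coeff_X_pow]
    by_cases h : (∑ i : Fin n, ((i : ℕ) + 1) * g i) = n <;> simp [h, Ne.symm, eq_comm]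
  rw [Finset.sum_congr rfl step, Finset.sum_ite, Finset.sum_const_zero, add_zero]
  refine Finset.sum_nbij' (i := fun f i => (f i : ℕ))
    (j := fun g i => (⟨min (g i) k, by omega⟩ : Fin (k + 1))) ?_ ?_ ?_ ?_ ?_
  · intro f hf
    simp only [mem_filter, mem_univ, true_and] at hf
    simp [Finset.mem_filter, Finset.mem_piAntidiag, hf.1, hf.2]
  · intro g hg
    simp only [mem_filter, Finset.mem_piAntidiag, mem_univ] at hg
    have hle : ∀ i, g i ≤ k := by
      intro i
      rw [← hg.1.1]
      exact Finset.single_le_sum (f := g) (fun j _ => Nat.zero_le _) (mem_univ i)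
    have hmin : ∀ i : Fin n, min (g i) k = g i := fun i => min_eq_left (hle i)
    simp only [mem_filter, mem_univ, true_and, Fin.val_mk, hmin]
    exact ⟨hg.2, hg.1.1⟩
  · intro f hf
    simp only [mem_filter, mem_univ, true_and] at hf
    have hle : ∀ i, (f i : ℕ) ≤ k := fun i => by
      calc (f i : ℕ) ≤ ∑ j : Fin n, (f j : ℕ) :=
            Finset.single_le_sum (f := fun j => (f j : ℕ)) (fun j _ => Nat.zero_le _) (mem_univ i)
        _ = k := hf.2
    funext i
    exact Fin.ext (by simp [min_eq_left (hle i)])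
  · intro g hg
    simp only [mem_filter, Finset.mem_piAntidiag, mem_univ] at hg
    have hle : ∀ i, g i ≤ k := by
      intro i
      rw [← hg.1.1]
      exact Finset.single_le_sum (f := g) (fun j _ => Nat.zero_le _) (mem_univ i)
    funext i
    simp [min_eq_left (hle i)]
  · intro f hf
    rfl

open PowerSeries in
lemma colorCompCountAux2 (n k : ℕ) (hk : 1 ≤ k) (hn : k ≤ n) :
    PowerSeries.coeff n ((P (fun m => (m : ℤ)) n) ^ k)
      = (Nat.choose (n + k - 1) (n - k) : ℤ) := by
  set F : ℤ⟦X⟧ := X * (invOneSubPow ℤ 2).val with hF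
  have hcoeffF : ∀ m : ℕ, PowerSeries.coeff m F = (m : ℤ) := by
    intro m
    cases m with
    | zero => simp [hF]
    | succ m =>
      have h2 : (2 : ℕ) = 1 + 1 := rfl
      rw [hF, PowerSeries.coeff_succ_X_mul, h2, invOneSubPow_val_succ_eq_mk_add_choose,
        PowerSeries.coeff_mk]
      rw [Nat.add_comm 1 m, Nat.choose_one_right]
  have hcoeffP : ∀ m : ℕ, m ≤ n → PowerSeries.coeff m (P (fun m => (m : ℤ)) n) = (m : ℤ) := by
    intro m hm
    rw [P, map_sum]
    simp only [PowerSeries.coeff_C_mul, PowerSeries.coeff_X_pow]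
    cases m with
    | zero => simp
    | succ j =>
      have hj : j < n := by omega
      rw [Finset.sum_eq_single (⟨j, hj⟩ : Fin n)]
      · simp
      · intro i _ hi
        have hne : ¬ ((j : ℕ) + 1 = (i : ℕ) + 1) := by
          intro h
          exact hi (by apply Fin.ext; simp only [Fin.val_mk]; omega)
        rw [if_neg hne, mul_zero]
      · simp
  have hdvd : (X : ℤ⟦X⟧) ^ (n + 1) ∣ F ^ k - (P (fun m => (m : ℤ)) n) ^ k := by
    refine dvd_trans ?_ (sub_dvd_pow_sub_pow _ _ k)
    rw [PowerSeries.X_pow_dvd_iff]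
    intro m hm
    rw [map_sub, hcoeffF, hcoeffP m (by omega), sub_self]
  have hFP : PowerSeries.coeff n ((P (fun m => (m : ℤ)) n) ^ k) = PowerSeries.coeff n (F ^ k) := by
    have h0 : PowerSeries.coeff n (F ^ k - (P (fun m => (m : ℤ)) n) ^ k) = 0 :=
      (PowerSeries.X_pow_dvd_iff.mp hdvd) n (by omega)
    rw [map_sub] at h0
    linarith
  rw [hFP]
  -- compute coeff n (F ^ k)
  have hval : ((invOneSubPow ℤ 2).val) ^ k = (invOneSubPow ℤ (2 * k)).val := by
    set a : ℤ⟦X⟧ := ((invOneSubPow ℤ 2).val) ^ k with ha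
    set b : ℤ⟦X⟧ := (invOneSubPow ℤ (2 * k)).val with hb
    have h1 : a * ((1 - X : ℤ⟦X⟧)) ^ (2 * k) = 1 := by
      rw [pow_mul, ha, ← mul_pow, ← invOneSubPow_inv_eq_one_sub_pow, Units.val_inv, one_pow]
    have h2 : b * ((1 - X : ℤ⟦X⟧)) ^ (2 * k) = 1 := by
      rw [hb, ← invOneSubPow_inv_eq_one_sub_pow, Units.val_inv]
    calc a = a * (b * (1 - X : ℤ⟦X⟧) ^ (2 * k)) := by rw [h2, mul_one]
      _ = b * (a * (1 - X : ℤ⟦X⟧) ^ (2 * k)) := by ring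
      _ = b := by rw [h1, mul_one]
  have hFk : F ^ k = X ^ k * (invOneSubPow ℤ (2 * k)).val := by
    rw [hF, mul_pow, hval]
  rw [hFk, PowerSeries.coeff_X_pow_mul', if_pos hn,
    invOneSubPow_val_eq_mk_sub_one_add_choose_of_pos _ _ (by omega), PowerSeries.coeff_mk]
  have e1 : 2 * k - 1 + (n - k) = n + k - 1 := by omega
  have e2 : n - k = (n + k - 1) - (2 * k - 1) := by omega
  rw [e1, e2, Nat.choose_symm (by omega)]

/-- For the sequence `wₙ = n`, the number of `n`-color compositions of `n` with `k`
parts is `c_{n,k}(n) = C(n+k-1, n-k)`. -/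
theorem colorCompCount_id (n k : ℕ) (hk : 1 ≤ k) (hn : k ≤ n) :
    colorCompCount (fun m => (m : ℤ)) n k = (Nat.choose (n + k - 1) (n - k) : ℤ) := by
  rw [colorCompCountAux1, colorCompCountAux2 n k hk hn]
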